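/- For every finite contiguous block S of the Thue–Morse word of even length, the difference between the numbers of A's and of B's in S is either 0 or ±2: for all natural numbers a and n with n even, the integer #{i : a ≤ i < a + n and t(i) = 0} − #{i : a ≤ i < a + n and t(i) = 1} belongs to {−2, 0, 2}. -/

import Mathlib

open Fin.NatCast in
/-- The Thue–Morse sequence: `t n` is the parity of the number of `1` digits
in the binary expansion of `n` (so `t 0 = 0`, `t (2n) = t n`, `t (2n+1) = 1 - t n`). -/
def thueMorse (n : ℕ) : Fin 2 := ((Nat.digits 2 n).sum : Fin 2)

private def tmSign (i : ℕ) : ℤ := if thueMorse i = 0 then 1 else -1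

private lemma fin2_cases (x : Fin 2) : x = 0 ∨ x = 1 := by fin_cases x <;> simp

private lemma tm_two_mul (k : ℕ) : thueMorse (2 * k) = thueMorse k := by
  rcases Nat.eq_zero_or_pos k with h | h
  · simp [h]
  · unfold thueMorse
    rw [Nat.digits_def' (by norm_num : 1 < 2) (by omega)]
    simp [Nat.mul_div_cancel_left, Nat.mul_mod_right]

private lemma tm_two_mul_add_one (k : ℕ) :
    thueMorse (2 * k + 1) = 1 + thueMorse k := by
  unfold thueMorse
  rw [Nat.digits_def' (by norm_num : 1 < 2) (by omega)]
  have h1 : (2 * k + 1) % 2 = 1 := by omega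
  have h2 : (2 * k + 1) / 2 = k := by omega
  rw [h1, h2]
  push_cast [List.sum_cons]
  simp only [Fin.ext_iff, Fin.val_add, Fin.val_natCast, Fin.val_one]
  omega

private lemma tmSign_pair (k : ℕ) : tmSign (2 * k) + tmSign (2 * k + 1) = 0 := by
  unfold tmSign
  rw [tm_two_mul, tm_two_mul_add_one]
  rcases fin2_cases (thueMorse k) with h | h <;> simp [h]

private def tmS (N : ℕ) : ℤ := ∑ i ∈ Finset.range N, tmSign i

private lemma tmS_even (m : ℕ) : tmS (2 * m) = 0 := by
  induction m with
  | zero => simp [tmS]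
  | succ m ih =>
    have h : 2 * (m + 1) = (2 * m + 1) + 1 := by ring
    rw [h]
    unfold tmS at ih ⊢
    rw [Finset.sum_range_succ, Finset.sum_range_succ, ih]
    have := tmSign_pair m
    linarith

private lemma tmS_odd (m : ℕ) : tmS (2 * m + 1) = 1 ∨ tmS (2 * m + 1) = -1 := by
  unfold tmS
  rw [Finset.sum_range_succ, ← tmS, tmS_even, zero_add]
  unfold tmSign
  rcases fin2_cases (thueMorse (2 * m)) with h | h <;> simp [h]

private lemma diff_eq_sum (s : Finset ℕ) :
    ((s.filter fun i => thueMorse i = 0).card : ℤ) -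
      ((s.filter fun i => thueMorse i = 1).card : ℤ) = ∑ i ∈ s, tmSign i := by
  rw [Finset.card_filter, Finset.card_filter]
  push_cast
  rw [← Finset.sum_sub_distrib]
  refine Finset.sum_congr rfl fun i _ => ?_
  unfold tmSign
  rcases fin2_cases (thueMorse i) with h | h <;> simp [h]

/-- In any finite contiguous block of even length of the Thue–Morse word, the
difference between the numbers of `A`'s (`t i = 0`) and of `B`'s (`t i = 1`)
is either `0` or `±2`. -/
theorem thueMorse_even_block_discrepancy (a n : ℕ) (hn : Even n) :
    ((((Finset.Ico a (a + n)).filter fun i => thueMorse i = 0).card : ℤ) -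
        (((Finset.Ico a (a + n)).filter fun i => thueMorse i = 1).card : ℤ))
      ∈ ({-2, 0, 2} : Set ℤ) := by
  rw [diff_eq_sum]
  have hsum : ∑ i ∈ Finset.Ico a (a + n), tmSign i = tmS (a + n) - tmS a := by
    unfold tmS
    rw [Finset.sum_Ico_eq_sub _ (Nat.le_add_right a n)]
  rw [hsum]
  obtain ⟨c, hc⟩ := hn
  rcases Nat.even_or_odd a with ⟨m, hm⟩ | ⟨m, hm⟩
  · have h1 : tmS a = 0 := by rw [hm, ← two_mul]; exact tmS_even m
    have h2 : tmS (a + n) = 0 := by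
      have : a + n = 2 * (m + c) := by omega
      rw [this]; exact tmS_even (m + c)
    simp [h1, h2]
  · have h1 : tmS a = 1 ∨ tmS a = -1 := by rw [hm]; exact tmS_odd m
    have h2 : tmS (a + n) = 1 ∨ tmS (a + n) = -1 := by
      have : a + n = 2 * (m + c) + 1 := by omega
      rw [this]; exact tmS_odd (m + c)
    rcases h1 with h1 | h1 <;> rcases h2 with h2 | h2 <;>
      simp [h1, h2, Set.mem_insert_iff]
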